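/- Let N be the free 2-step nilpotent group on four generators a₀, a₁, b₀, b₁. If an element of the form [a₀,b₁]^{d₁}·[b₀,a₁]^{d₂} (with d₁, d₂ ∈ ℤ) is a commutator of two elements of N, then d₁ = 0 or d₂ = 0. -/

import Mathlib

open scoped commutatorElement

/-- Heisenberg-type group: pairs (u, m) with u : ℤ⁴, m : 4×4 integer matrix (as function),
multiplication twisted by the outer product cocycle. -/
structure Heis where
  u : Fin 4 → ℤ
  m : Fin 4 → Fin 4 → ℤ

namespace Heis

def outer (u v : Fin 4 → ℤ) : Fin 4 → Fin 4 → ℤ := fun i j => u i * v j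

instance : Mul Heis := ⟨fun x y => ⟨x.u + y.u, x.m + y.m + outer x.u y.u⟩⟩
instance : One Heis := ⟨⟨0, 0⟩⟩
instance : Inv Heis := ⟨fun x => ⟨-x.u, -x.m + outer x.u x.u⟩⟩

@[simp] lemma mul_u (x y : Heis) : (x * y).u = x.u + y.u := rfl
@[simp] lemma mul_m (x y : Heis) : (x * y).m = x.m + y.m + outer x.u y.u := rfl
@[simp] lemma one_u : (1 : Heis).u = 0 := rfl
@[simp] lemma one_m : (1 : Heis).m = 0 := rfl
@[simp] lemma inv_u (x : Heis) : x⁻¹.u = -x.u := rfl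
@[simp] lemma inv_m (x : Heis) : x⁻¹.m = -x.m + outer x.u x.u := rfl

lemma ext' {x y : Heis} (h1 : x.u = y.u) (h2 : x.m = y.m) : x = y := by
  cases x; cases y; cases h1; cases h2; rfl

instance : Group Heis where
  mul_assoc a b c := by
    refine ext' (funext fun i => ?_) (funext fun i => funext fun j => ?_) <;>
      simp [Heis.outer, Pi.add_apply] <;> ring
  one_mul a := by
    refine ext' (funext fun i => ?_) (funext fun i => funext fun j => ?_) <;>
      simp [Heis.outer, Pi.add_apply]
  mul_one a := by
    refine ext' (funext fun i => ?_) (funext fun i => funext fun j => ?_) <;>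
      simp [Heis.outer, Pi.add_apply]
  inv_mul_cancel a := by
    refine ext' (funext fun i => ?_) (funext fun i => funext fun j => ?_) <;>
      simp [Heis.outer, Pi.add_apply] <;> ring

lemma comm_eq (x y : Heis) :
    ⁅x, y⁆ = ⟨0, outer x.u y.u - outer y.u x.u⟩ := by
  refine ext' (funext fun i => ?_) (funext fun i => funext fun j => ?_) <;>
    simp [commutatorElement_def, outer, Pi.add_apply, Pi.neg_apply, Pi.sub_apply,
      Pi.zero_apply] <;> ring

/-- Projection to the abelianization. -/
def proj : Heis →* Multiplicative (Fin 4 → ℤ) where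
  toFun x := Multiplicative.ofAdd x.u
  map_one' := rfl
  map_mul' x y := rfl

/-- Central embedding. -/
def cent : Multiplicative (Fin 4 → Fin 4 → ℤ) →* Heis where
  toFun w := ⟨0, w.toAdd⟩
  map_one' := rfl
  map_mul' x y := by
    refine ext' (funext fun i => ?_) (funext fun i => funext fun j => ?_) <;>
      simp [Heis.outer, Pi.add_apply]

lemma central_pow (w : Fin 4 → Fin 4 → ℤ) (d : ℤ) :
    (⟨0, w⟩ : Heis) ^ d = ⟨0, d • w⟩ := by
  have : (⟨0, w⟩ : Heis) = cent (Multiplicative.ofAdd w) := rfl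
  rw [this, ← map_zpow]
  have : (Multiplicative.ofAdd w) ^ d = Multiplicative.ofAdd (d • w) := by
    rw [← ofAdd_zsmul]
  rw [this]; rfl

end Heis

theorem stmt2
    (a₀ a₁ b₀ b₁ : FreeGroup (Fin 4) ⧸ (⊤ : Subgroup (FreeGroup (Fin 4))).lowerCentralSeries 2)
    (ha₀ : a₀ = QuotientGroup.mk (FreeGroup.of 0))
    (ha₁ : a₁ = QuotientGroup.mk (FreeGroup.of 1))
    (hb₀ : b₀ = QuotientGroup.mk (FreeGroup.of 2))
    (hb₁ : b₁ = QuotientGroup.mk (FreeGroup.of 3))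
    (d₁ d₂ : ℤ)
    (hcomm : ∃ g h : FreeGroup (Fin 4) ⧸ (⊤ : Subgroup (FreeGroup (Fin 4))).lowerCentralSeries 2,
      ⁅a₀, b₁⁆ ^ d₁ * ⁅b₀, a₁⁆ ^ d₂ = ⁅g, h⁆) :
    d₁ = 0 ∨ d₂ = 0 := by
  classical
  set F := FreeGroup (Fin 4)
  -- the homomorphism from the free group
  set f : F →* Heis := FreeGroup.lift (fun i => (⟨Pi.single i 1, 0⟩ : Heis)) with hf
  -- abelianized composite kills commutators
  have habel : (⊤ : Subgroup F).lowerCentralSeries 1 ≤ (Heis.proj.comp f).ker := by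
    rw [Subgroup.top_lowerCentralSeries_one, commutator_def, Subgroup.commutator_le]
    intro x _ y _
    rw [MonoidHom.mem_ker, map_commutatorElement]
    exact commutatorElement_eq_one_iff_commute.mpr (Commute.all _ _)
  have hker : (⊤ : Subgroup F).lowerCentralSeries 2 ≤ f.ker := by
    have h2 : (⊤ : Subgroup F).lowerCentralSeries 2 = ⁅(⊤ : Subgroup F).lowerCentralSeries 1, (⊤ : Subgroup F)⁆ :=
      Subgroup.lowerCentralSeries_succ (S := ⊤) 1
    rw [h2, Subgroup.commutator_le]
    intro x hx y _
    rw [MonoidHom.mem_ker, map_commutatorElement]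
    have hx0 : (f x).u = 0 := by
      have := habel hx
      rw [MonoidHom.mem_ker] at this
      have : Multiplicative.toAdd (Heis.proj (f x)) = 0 := by
        rw [show Heis.proj (f x) = (Heis.proj.comp f) x from rfl, this]; rfl
      exact this
    rw [Heis.comm_eq]
    refine Heis.ext' (by simp) (funext fun i => funext fun j => by simp [hx0, Heis.outer])
  set φ : (F ⧸ (⊤ : Subgroup F).lowerCentralSeries 2) →* Heis := QuotientGroup.lift _ f hker with hφ
  obtain ⟨g, h, heq⟩ := hcomm
  have heq' := congrArg φ heq
  rw [map_mul, map_zpow, map_zpow, map_commutatorElement, map_commutatorElement,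
    map_commutatorElement, ha₀, ha₁, hb₀, hb₁] at heq'
  have key : ∀ i : Fin 4, φ (QuotientGroup.mk (FreeGroup.of i)) =
      (⟨Pi.single i 1, 0⟩ : Heis) := by
    intro i
    have h1 : φ (QuotientGroup.mk (FreeGroup.of i)) = f (FreeGroup.of i) :=
      QuotientGroup.lift_mk' _ hker _
    rw [h1, hf, FreeGroup.lift_apply_of]
  rw [key 0, key 1, key 2, key 3, Heis.comm_eq, Heis.comm_eq, Heis.comm_eq] at heq'
  rw [Heis.central_pow, Heis.central_pow] at heq'
  have hm := congrArg Heis.m heq'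
  set u := (φ g).u with hu
  set v := (φ h).u with hv
  have e : ∀ i j : Fin 4,
      d₁ • (Heis.outer (Pi.single 0 1) (Pi.single 3 1) - Heis.outer (Pi.single 3 1) (Pi.single 0 1)) i j
      + d₂ • (Heis.outer (Pi.single 2 1) (Pi.single 1 1) - Heis.outer (Pi.single 1 1) (Pi.single 2 1)) i j
      = u i * v j - v i * u j := by
    intro i j
    have := congrFun (congrFun hm i) j
    simpa [Heis.outer, Pi.add_apply, Pi.sub_apply, Pi.smul_apply, Pi.zero_apply] using this
  have e03 := e 0 3
  have e12 := e 1 2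
  have e01 := e 0 1
  have e02 := e 0 2
  have e13 := e 1 3
  have e23 := e 2 3
  simp [Heis.outer, Pi.single_apply, Pi.sub_apply, Pi.smul_apply, smul_eq_mul] at e03 e12 e01 e02 e13 e23
  have hd : d₁ * d₂ = 0 := by
    linear_combination (-(u 1 * v 2 - v 1 * u 2)) * e03 + (-d₁) * e12 +
      (u 1 * v 3 - v 1 * u 3) * e02 + (-(u 2 * v 3 - v 2 * u 3)) * e01
  rcases mul_eq_zero.mp hd with h' | h'
  · exact Or.inl h'
  · exact Or.inr h'
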